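/- Let Q_8 = {±1, ±iσ^x, ±iσ^y, ±iσ^z} act on A = Z/2Z × Z/2Z such that ±iσ^x and ±iσ^z swap the two factors of A while ±1 and ±iσ^y act trivially. Then H^1(Q_8, A) ≅ Z/2Z. -/

import Mathlib

noncomputable section

/-- The monoid homomorphism from `Multiplicative (ZMod 2)` determined by an element whose
square is `1`. -/
def homOfSq {M : Type*} [Monoid M] (s : M) (hs : s * s = 1) :
    Multiplicative (ZMod 2) →* M where
  toFun g := s ^ (Multiplicative.toAdd g).val
  map_one' := pow_zero s
  map_mul' := by
    intro a b
    show s ^ (Multiplicative.toAdd a + Multiplicative.toAdd b).val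
      = s ^ (Multiplicative.toAdd a).val * s ^ (Multiplicative.toAdd b).val
    have key : ∀ x y : ZMod 2, s ^ (x + y).val = s ^ x.val * s ^ y.val := by
      intro x y
      have h2 : ∀ z : ZMod 2, z = 0 ∨ z = 1 := by decide
      rcases h2 x with rfl | rfl <;> rcases h2 y with rfl | rfl <;>
        simp [hs, show ((1:ZMod 2)+1) = 0 by decide, show ZMod.val (1 : ZMod 2) = 1 by decide]
    exact key _ _

/-- The swap endomorphism of `ℤ/2 × ℤ/2`. -/
def swapEnd : Module.End ℤ (ZMod 2 × ZMod 2) :=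
  (LinearEquiv.prodComm ℤ (ZMod 2) (ZMod 2)).toLinearMap

lemma swapEnd_sq : swapEnd * swapEnd = 1 := LinearMap.ext fun _ => rfl

/-- The representation of `ℤ/2` on `A = ℤ/2 × ℤ/2` where the nontrivial element swaps. -/
def swapRep : Representation ℤ (Multiplicative (ZMod 2)) (ZMod 2 × ZMod 2) :=
  homOfSq swapEnd swapEnd_sq

/-- The surjection `Q₈ → ℤ/2` whose kernel is the cyclic subgroup
`{±1, ±iσʸ} = {a 0, a 2, xa 0, xa 2}` of order 4. -/
def q8parity : QuaternionGroup 2 →* Multiplicative (ZMod 2) where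
  toFun g := Multiplicative.ofAdd (match g with
    | QuaternionGroup.a i => ((i.val : ZMod 2))
    | QuaternionGroup.xa i => ((i.val : ZMod 2)))
  map_one' := by decide
  map_mul' := by decide

/-- The action of `Q₈ = {±1, ±iσˣ, ±iσʸ, ±iσᶻ}` on `A = ℤ/2 × ℤ/2` in which `±iσˣ` and
`±iσᶻ` swap the two factors of `A` while `±1` and `±iσʸ` act trivially. -/
def q8Rep : Representation ℤ (QuaternionGroup 2) (ZMod 2 × ZMod 2) :=
  swapRep.comp q8parity


section Aux

open groupCohomology QuaternionGroup

lemma q8_triv : ∀ x : ZMod 2 × ZMod 2,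
    q8Rep (a 0) x = x ∧ q8Rep (a 2) x = x ∧ q8Rep (xa 0) x = x ∧ q8Rep (xa 2) x = x := by
  decide

lemma q8_swap : ∀ x : ZMod 2 × ZMod 2,
    q8Rep (a 1) x = (x.2, x.1) ∧ q8Rep (a 3) x = (x.2, x.1) ∧
    q8Rep (xa 1) x = (x.2, x.1) ∧ q8Rep (xa 3) x = (x.2, x.1) := by
  decide

lemma add_self_eq_zero' : ∀ v : ZMod 2 × ZMod 2, v + v = 0 := by decide

lemma pext : ∀ x y : ZMod 2 × ZMod 2, x.1 = y.1 → x.2 = y.2 → x = y := by decide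

/-- The 1-coboundaries, as a submodule of the 1-cocycles. -/
abbrev B1 : Submodule ℤ (cocycles₁ (Rep.of q8Rep)) :=
  LinearMap.range (shortComplexH1 (Rep.of q8Rep)).moduleCatToCycles

/-- Evaluation at `xa 0`, first coordinate, on 1-cocycles. -/
def phi : cocycles₁ (Rep.of q8Rep) →ₗ[ℤ] ZMod 2 where
  toFun f := (f.1 (QuaternionGroup.xa 0)).1
  map_add' _ _ := rfl
  map_smul' _ _ := rfl

/-- The nontrivial cocycle. -/
def Fc : QuaternionGroup 2 → ZMod 2 × ZMod 2
  | .a _ => 0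
  | .xa _ => (1, 1)

lemma Fc_mem : Fc ∈ cocycles₁ (Rep.of q8Rep) := by
  rw [mem_cocycles₁_iff]
  intro g h
  show Fc (g * h) = q8Rep g (Fc h) + Fc g
  revert g h
  decide

lemma bd_le : B1 ≤ LinearMap.ker phi := by
  intro f hf
  rcases hf with ⟨x, hx⟩
  rw [LinearMap.mem_ker]
  show ((f.1 (xa 0) : ZMod 2 × ZMod 2)).1 = 0
  let x' : ZMod 2 × ZMod 2 := x
  have h0 : q8Rep (xa 0) x' - x' = f.1 (xa 0) := by rw [← hx]; rfl
  rw [← h0, (q8_triv _).2.2.1, sub_self]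
  rfl

/-- Structure theorem for cocycles killed by `phi`: they are coboundaries of
`((F (a 1)).1, 0)`. -/
lemma cocycle_struct (F : QuaternionGroup 2 → ZMod 2 × ZMod 2)
    (key : ∀ g h : QuaternionGroup 2, F (g * h) = q8Rep g (F h) + F g)
    (h0 : (F (xa 0)).1 = 0) :
    ∀ g : QuaternionGroup 2, q8Rep g ((F (a 1)).1, 0) - ((F (a 1)).1, 0) = F g := by
  have hzmod : ∀ a b : ZMod 2, a + b = 0 → b = a := by decide
  have hone : F (a 0) = 0 := by
    have h : F (a 0) = q8Rep (a 0) (F (a 0)) + F (a 0) := key (a 0) (a 0)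
    rw [(q8_triv _).1, add_self_eq_zero'] at h
    exact h
  have e1 : F (a 2) = 0 := by
    have h : F (a 2) = q8Rep (xa 0) (F (xa 0)) + F (xa 0) := key (xa 0) (xa 0)
    rw [(q8_triv _).2.2.1, add_self_eq_zero'] at h
    exact h
  have e2 : (F (a 1)).2 = (F (a 1)).1 := by
    have h : F (a 2) = q8Rep (a 1) (F (a 1)) + F (a 1) := key (a 1) (a 1)
    rw [e1, (q8_swap _).1] at h
    exact (hzmod _ _ (congrArg Prod.fst h.symm)).symm
  have e3 : F (xa 1) = F (a 1) + F (xa 0) := by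
    have h : F (xa 1) = q8Rep (xa 0) (F (a 1)) + F (xa 0) := key (xa 0) (a 1)
    rw [(q8_triv _).2.2.1] at h
    exact h
  have e4 : (F (xa 1)).2 = (F (xa 1)).1 := by
    have h : F (a 2) = q8Rep (xa 1) (F (xa 1)) + F (xa 1) := key (xa 1) (xa 1)
    rw [e1, (q8_swap _).2.2.1] at h
    exact (hzmod _ _ (congrArg Prod.fst h.symm)).symm
  have f1 : (F (xa 1)).1 = (F (a 1)).1 + (F (xa 0)).1 := congrArg Prod.fst e3
  have f2 : (F (xa 1)).2 = (F (a 1)).2 + (F (xa 0)).2 := congrArg Prod.snd e3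
  have hv2 : (F (xa 0)).2 = 0 := by
    have solve : ∀ A1 A2 X1 X2 W1 W2 : ZMod 2, W2 = W1 → A2 = A1 →
        W1 = A1 + X1 → W2 = A2 + X2 → X1 = 0 → X2 = 0 := by decide
    exact solve (F (a 1)).1 (F (a 1)).2 (F (xa 0)).1 (F (xa 0)).2
      (F (xa 1)).1 (F (xa 1)).2 e4 e2 f1 f2 h0
  have hx0 : F (xa 0) = 0 := pext _ _ h0 hv2
  have ea1 : F (a 1) = ((F (a 1)).1, (F (a 1)).1) := pext _ _ rfl e2
  have ea3 : F (a 3) = F (a 1) := by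
    have h : F (a 3) = q8Rep (a 1) (F (a 2)) + F (a 1) := key (a 1) (a 2)
    rw [e1, map_zero, zero_add] at h
    exact h
  have ex1 : F (xa 1) = F (a 1) := by rw [e3, hx0, add_zero]
  have ex2 : F (xa 2) = 0 := by
    have h : F (xa 2) = q8Rep (xa 0) (F (a 2)) + F (xa 0) := key (xa 0) (a 2)
    rw [e1, map_zero, zero_add, hx0] at h
    exact h
  have ex3 : F (xa 3) = F (a 1) := by
    have h : F (xa 3) = q8Rep (xa 0) (F (a 3)) + F (xa 0) := key (xa 0) (a 3)
    rw [(q8_triv _).2.2.1, hx0, add_zero, ea3] at h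
    exact h
  have hD : ∀ c : ZMod 2,
      (q8Rep (a 0) ((c, 0) : ZMod 2 × ZMod 2) - (c, 0) = 0) ∧
      (q8Rep (a 1) ((c, 0) : ZMod 2 × ZMod 2) - (c, 0) = (c, c)) ∧
      (q8Rep (a 2) ((c, 0) : ZMod 2 × ZMod 2) - (c, 0) = 0) ∧
      (q8Rep (a 3) ((c, 0) : ZMod 2 × ZMod 2) - (c, 0) = (c, c)) ∧
      (q8Rep (xa 0) ((c, 0) : ZMod 2 × ZMod 2) - (c, 0) = 0) ∧
      (q8Rep (xa 1) ((c, 0) : ZMod 2 × ZMod 2) - (c, 0) = (c, c)) ∧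
      (q8Rep (xa 2) ((c, 0) : ZMod 2 × ZMod 2) - (c, 0) = 0) ∧
      (q8Rep (xa 3) ((c, 0) : ZMod 2 × ZMod 2) - (c, 0) = (c, c)) := by
    decide
  have hcase : ∀ g : QuaternionGroup 2, g = a 0 ∨ g = a 1 ∨ g = a 2 ∨ g = a 3 ∨
      g = xa 0 ∨ g = xa 1 ∨ g = xa 2 ∨ g = xa 3 := by decide
  intro g
  rcases hcase g with rfl | rfl | rfl | rfl | rfl | rfl | rfl | rfl
  · rw [hone]; exact (hD _).1
  · conv_rhs => rw [ea1]
    exact (hD _).2.1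
  · rw [e1]; exact (hD _).2.2.1
  · rw [ea3]; conv_rhs => rw [ea1]
    exact (hD _).2.2.2.1
  · rw [hx0]; exact (hD _).2.2.2.2.1
  · rw [ex1]; conv_rhs => rw [ea1]
    exact (hD _).2.2.2.2.2.1
  · rw [ex2]; exact (hD _).2.2.2.2.2.2.1
  · rw [ex3]; conv_rhs => rw [ea1]
    exact (hD _).2.2.2.2.2.2.2

lemma ker_le : LinearMap.ker phi ≤ B1 := by
  intro f hf
  let F : QuaternionGroup 2 → ZMod 2 × ZMod 2 := f.1
  have key : ∀ g h : QuaternionGroup 2, F (g * h) = q8Rep g (F h) + F g :=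
    (mem_cocycles₁_iff (A := Rep.of q8Rep) f.1).1 f.2
  have h0 : (F (xa 0)).1 = 0 := LinearMap.mem_ker.1 hf
  exact ⟨(((F (a 1)).1, 0) : ZMod 2 × ZMod 2),
    Subtype.ext (funext fun g => cocycle_struct F key h0 g)⟩

end Aux

/-- With the above `Q₈`-action on `A = ℤ/2 × ℤ/2` (where `±iσˣ, ±iσᶻ`
swap the factors and `±1, ±iσʸ` act trivially), `H¹(Q₈, A) ≅ ℤ/2`. -/
theorem stmt_12 : Nonempty (groupCohomology.H1 (Rep.of q8Rep) ≃+ ZMod 2) := by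
  classical
  let psi : (groupCohomology.cocycles₁ (Rep.of q8Rep) ⧸ B1) →ₗ[ℤ] ZMod 2 :=
    Submodule.liftQ B1 phi bd_le
  have hinj : Function.Injective psi := by
    rw [← LinearMap.ker_eq_bot]
    exact Submodule.ker_liftQ_eq_bot _ _ _ ker_le
  have hone : psi (Submodule.Quotient.mk ⟨Fc, Fc_mem⟩) = 1 := by
    rw [Submodule.liftQ_apply]
    rfl
  have hsurj : Function.Surjective psi := by
    intro c
    rcases (by decide : ∀ z : ZMod 2, z = 0 ∨ z = 1) c with rfl | rfl
    · exact ⟨0, map_zero _⟩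
    · exact ⟨_, hone⟩
  exact ⟨((groupCohomology.H1Iso (Rep.of q8Rep)).toLinearEquiv.trans
    (LinearEquiv.ofBijective psi ⟨hinj, hsurj⟩)).toAddEquiv⟩

end
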